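/- Effective resistance is monotone under adding edges (Rayleigh monotonicity, finite matrix form): if L₁ and L₂ are Laplacians of connected graphs on the same vertex set with L₂ = L₁ + w·(e_a − e_b)(e_a − e_b)ᵀ for some w > 0 (adding an edge), then for all vertices i, j, the resistance distance under L₂ is at most that under L₁: (e_i−e_j)ᵀL₂⁺(e_i−e_j) ≤ (e_i−e_j)ᵀL₁⁺(e_i−e_j). -/

import Mathlib

open Matrix

private lemma symm_dot {n : ℕ} (L : Matrix (Fin n) (Fin n) ℝ) (hLt : Lᵀ = L)
    (v w : Fin n → ℝ) : v ⬝ᵥ L.mulVec w = L.mulVec v ⬝ᵥ w := by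
  rw [dotProduct_mulVec, ← mulVec_transpose, hLt]

private lemma proj_fix {n : ℕ} (L Lp : Matrix (Fin n) (Fin n) ℝ)
    (hLt : Lᵀ = L)
    (hker : ∀ x : Fin n → ℝ, L.mulVec x = 0 ↔ ∃ c : ℝ, x = fun _ => c)
    (h1 : L * Lp * L = L) (h3 : (L * Lp).IsSymm)
    (x : Fin n → ℝ) (hx : x ⬝ᵥ (fun _ => (1:ℝ)) = 0) (hn : 0 < n) :
    L.mulVec (Lp.mulVec x) = x := by
  have hP : L * (L * Lp) = L := by
    have h := congrArg Matrix.transpose h1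
    rwa [transpose_mul, h3.eq, hLt] at h
  have hone : L.mulVec (fun _ => 1) = 0 := (hker _).mpr ⟨1, rfl⟩
  have hzero : L.mulVec (x - (L * Lp).mulVec x) = 0 := by
    rw [mulVec_sub, mulVec_mulVec, hP, sub_self]
  obtain ⟨c, hc⟩ := (hker _).mp hzero
  -- sum of (L*Lp).mulVec x is zero
  have hsum : ((L * Lp).mulVec x) ⬝ᵥ (fun _ => (1:ℝ)) = 0 := by
    have : ((L * Lp).mulVec x) ⬝ᵥ (fun _ => (1:ℝ)) =
        (Lp.mulVec x) ⬝ᵥ L.mulVec (fun _ => (1:ℝ)) := by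
      rw [← mulVec_mulVec, dotProduct_comm, symm_dot L hLt]
      exact dotProduct_comm _ _
    rw [this, hone, dotProduct_zero]
  have hc0 : c = 0 := by
    have h := congrArg (fun v => v ⬝ᵥ (fun _ => (1:ℝ))) hc
    simp only [sub_dotProduct, hx, hsum, sub_zero, zero_sub] at h
    have : (fun _ => c : Fin n → ℝ) ⬝ᵥ (fun _ => (1:ℝ)) = n * c := by
      simp [dotProduct, mul_comm]
    rw [this] at h
    have hn' : (n : ℝ) ≠ 0 := Nat.cast_ne_zero.mpr hn.ne'
    have h2 : (n : ℝ) * c = 0 := by linarith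
    exact (mul_eq_zero.mp h2).resolve_left hn'
  have : x - (L * Lp).mulVec x = 0 := by rw [hc, hc0]; ext k; simp
  have := sub_eq_zero.mp this
  rw [mulVec_mulVec]
  exact this.symm

/-- Rayleigh monotonicity: adding an edge (a rank-one term
w(e_a−e_b)(e_a−e_b)ᵀ with w > 0) to a connected graph Laplacian can only decrease
every effective resistance. -/
theorem rayleigh_monotonicity {n : ℕ} (L₁ L₂ Lp₁ Lp₂ : Matrix (Fin n) (Fin n) ℝ)
    (hL₁ : L₁.PosSemidef) (hL₂ : L₂.PosSemidef)
    (hker₁ : ∀ x : Fin n → ℝ, L₁.mulVec x = 0 ↔ ∃ c : ℝ, x = fun _ => c)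
    (hker₂ : ∀ x : Fin n → ℝ, L₂.mulVec x = 0 ↔ ∃ c : ℝ, x = fun _ => c)
    (w : ℝ) (hw : 0 < w) (a b : Fin n)
    (hL : L₂ = L₁ + w • vecMulVec (Pi.single a 1 - Pi.single b 1)
      (Pi.single a 1 - Pi.single b 1))
    (h11 : L₁ * Lp₁ * L₁ = L₁) (h12 : Lp₁ * L₁ * Lp₁ = Lp₁)
    (h13 : (L₁ * Lp₁).IsSymm) (h14 : (Lp₁ * L₁).IsSymm)
    (h21 : L₂ * Lp₂ * L₂ = L₂) (h22 : Lp₂ * L₂ * Lp₂ = Lp₂)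
    (h23 : (L₂ * Lp₂).IsSymm) (h24 : (Lp₂ * L₂).IsSymm)
    (i j : Fin n) :
    (Pi.single i 1 - Pi.single j 1) ⬝ᵥ Lp₂.mulVec (Pi.single i 1 - Pi.single j 1) ≤
      (Pi.single i 1 - Pi.single j 1) ⬝ᵥ Lp₁.mulVec (Pi.single i 1 - Pi.single j 1) := by
  set u : Fin n → ℝ := Pi.single a 1 - Pi.single b 1 with hu
  set x : Fin n → ℝ := Pi.single i 1 - Pi.single j 1 with hxdef
  have hL1t : L₁ᵀ = L₁ := by
    rw [← conjTranspose_eq_transpose_of_trivial]; exact hL₁.1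
  have hL2t : L₂ᵀ = L₂ := by
    rw [← conjTranspose_eq_transpose_of_trivial]; exact hL₂.1
  have hn : 0 < n := i.pos
  have hx : x ⬝ᵥ (fun _ => (1:ℝ)) = 0 := by
    simp [hxdef, sub_dotProduct, single_dotProduct]
  set y : Fin n → ℝ := Lp₂.mulVec x with hy
  set z : Fin n → ℝ := Lp₁.mulVec x with hz
  have hx1 : L₁.mulVec z = x := proj_fix L₁ Lp₁ hL1t hker₁ h11 h13 x hx hn
  have hx2 : L₂.mulVec y = x := proj_fix L₂ Lp₂ hL2t hker₂ h21 h23 x hx hn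
  -- y ⬝ L₂ y = y ⬝ L₁ y + w * (u ⬝ y)^2
  have hquad : y ⬝ᵥ L₂.mulVec y = y ⬝ᵥ L₁.mulVec y + w * (u ⬝ᵥ y) ^ 2 := by
    rw [hL, add_mulVec, dotProduct_add]
    congr 1
    have hvv : (vecMulVec u u).mulVec y = (u ⬝ᵥ y) • u := by
      ext k
      simp only [mulVec, vecMulVec_apply, dotProduct, Pi.smul_apply, smul_eq_mul,
        Finset.sum_mul]
      exact Finset.sum_congr rfl (fun l _ => by ring)
    rw [smul_mulVec, hvv, dotProduct_smul, dotProduct_smul, smul_eq_mul,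
      smul_eq_mul, dotProduct_comm]
    ring
  -- key PSD inequality
  have hpsd : 0 ≤ (z - y) ⬝ᵥ L₁.mulVec (z - y) := by simpa using hL₁.dotProduct_mulVec_nonneg (z - y)
  have hexp : (z - y) ⬝ᵥ L₁.mulVec (z - y) =
      x ⬝ᵥ z - 2 * (x ⬝ᵥ y) + y ⬝ᵥ L₁.mulVec y := by
    rw [sub_dotProduct, mulVec_sub, dotProduct_sub, dotProduct_sub]
    have e1 : z ⬝ᵥ L₁.mulVec z = x ⬝ᵥ z := by
      rw [symm_dot L₁ hL1t, hx1]
    have e2 : z ⬝ᵥ L₁.mulVec y = x ⬝ᵥ y := by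
      rw [symm_dot L₁ hL1t, hx1]
    have e3 : y ⬝ᵥ L₁.mulVec z = x ⬝ᵥ y := by
      rw [hx1, dotProduct_comm]
    rw [e1, e2, e3]; ring
  have hyx : y ⬝ᵥ L₂.mulVec y = x ⬝ᵥ y := by
    rw [hx2, dotProduct_comm]
  have hsq : 0 ≤ w * (u ⬝ᵥ y) ^ 2 := by positivity
  nlinarith [hpsd, hexp, hquad, hyx, hsq]
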